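/- Let H be a complex Hilbert space of dimension at least 2 and fix q with 0 < q ≤ 1. Then for every bounded linear operator A on H, (q/2)·‖A‖ ≤ r_q(A) ≤ ‖A‖, where ‖A‖ is the operator norm. In particular the q-numerical radius is a norm on the bounded operators, equivalent to the operator norm. -/

import Mathlib

noncomputable section

open scoped InnerProductSpace

/-- Any vector admits a unit vector orthogonal to it, when the rank is at least 2. -/
private lemma rqE_aux_exists_orth {E : Type*} [NormedAddCommGroup E] [InnerProductSpace ℂ E]
    [CompleteSpace E] (hdim : 2 ≤ Module.rank ℂ E) (x : E) :
    ∃ z : E, ‖z‖ = 1 ∧ (inner ℂ x z : ℂ) = 0 := by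
  have h : (ℂ ∙ x)ᗮ ≠ ⊥ := by
    intro hbot
    have htop : (ℂ ∙ x) = ⊤ := Submodule.orthogonal_eq_bot_iff.mp hbot
    have hrank : Module.rank ℂ E ≤ 1 := by
      rw [← rank_top ℂ E, ← htop]
      exact (rank_span_le _).trans (by simp)
    have := hdim.trans hrank
    norm_num at this
  obtain ⟨v, hv, hv0⟩ := Submodule.ne_bot_iff _ |>.mp h
  have hxv : (inner ℂ x v : ℂ) = 0 :=
    (Submodule.mem_orthogonal _ _).mp hv x (Submodule.mem_span_singleton_self x)
  refine ⟨(‖v‖ : ℂ)⁻¹ • v, ?_, ?_⟩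
  · rw [norm_smul]
    simp [norm_ne_zero_iff.mpr hv0]
  · rw [inner_smul_right, hxv, mul_zero]

/-- Given a unit vector `x` and a unit vector `z` orthogonal to it, one can find a unit
vector `y` with `⟪y, x⟫ = q` and `|⟪y, A x⟫| ≥ q·|⟪x, A x⟫|`. -/
private lemma rqE_aux_key {E : Type*} [NormedAddCommGroup E] [InnerProductSpace ℂ E]
    (q : ℝ) (hq0 : 0 < q) (hq1 : q ≤ 1) (A : E →L[ℂ] E)
    (x : E) (hx1 : ‖x‖ = 1) (z : E) (hz1 : ‖z‖ = 1) (hxz : (inner ℂ x z : ℂ) = 0) :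
    ∃ y : E, ‖y‖ = 1 ∧ (inner ℂ y x : ℂ) = (q : ℂ) ∧
      q * ‖(inner ℂ x (A x) : ℂ)‖ ≤ ‖(inner ℂ y (A x) : ℂ)‖ := by
  set s : ℝ := Real.sqrt (1 - q ^ 2) with hs
  have hs2 : s ^ 2 = 1 - q ^ 2 := Real.sq_sqrt (by nlinarith)
  set a : ℂ := inner ℂ x (A x) with ha
  set b : ℂ := inner ℂ z (A x) with hb
  obtain ⟨ε, hε2, hre0⟩ : ∃ ε : ℝ, ε ^ 2 = 1 ∧
      0 ≤ ((starRingEnd ℂ) ((q : ℂ) * a) * ((ε : ℂ) * ((s : ℂ) * b))).re := by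
    rcases le_or_gt 0 (((starRingEnd ℂ) ((q : ℂ) * a) * ((s : ℂ) * b)).re) with h | h
    · exact ⟨1, by norm_num, by push_cast; simpa using h⟩
    · refine ⟨-1, by norm_num, ?_⟩
      have hneg : ((-1 : ℝ) : ℂ) * ((s : ℂ) * b) = -((s : ℂ) * b) := by push_cast; ring
      rw [hneg, mul_neg, Complex.neg_re]
      linarith
  set c : ℝ := ε * s with hc
  have hc2 : c ^ 2 = 1 - q ^ 2 := by rw [hc, mul_pow, hε2, hs2, one_mul]
  have hcb : ((c : ℝ) : ℂ) * b = (ε : ℂ) * ((s : ℂ) * b) := by rw [hc]; push_cast; ring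
  have hzx : (inner ℂ z x : ℂ) = 0 := by rw [← inner_conj_symm, hxz, map_zero]
  refine ⟨(q : ℂ) • x + (c : ℂ) • z, ?_, ?_, ?_⟩
  · have hnorm : ‖(q : ℂ) • x + (c : ℂ) • z‖ ^ 2 = 1 := by
      rw [norm_add_sq (𝕜 := ℂ)]
      rw [inner_smul_left, inner_smul_right, hxz]
      simp only [norm_smul, Complex.norm_real, Real.norm_eq_abs, hx1, hz1, mul_one,
        mul_zero, Complex.zero_re, map_zero]
      rw [sq_abs, sq_abs]
      linarith [hc2]
    have h1 : (‖(q : ℂ) • x + (c : ℂ) • z‖ - 1) * (‖(q : ℂ) • x + (c : ℂ) • z‖ + 1) = 0 := by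
      linear_combination hnorm
    rcases mul_eq_zero.mp h1 with h2 | h2
    · linarith
    · linarith [norm_nonneg ((q : ℂ) • x + (c : ℂ) • z)]
  · rw [inner_add_left, inner_smul_left, inner_smul_left, hzx, mul_zero, add_zero,
      Complex.conj_ofReal, inner_self_eq_norm_sq_to_K, hx1]
    norm_num
  · rw [inner_add_left, inner_smul_left, inner_smul_left, Complex.conj_ofReal,
      Complex.conj_ofReal, ← ha, ← hb]
    have hql : q * ‖a‖ = ‖(q : ℂ) * a‖ := by
      rw [norm_mul, Complex.norm_real, Real.norm_eq_abs, abs_of_pos hq0]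
    rw [hql]
    have hsq : ‖(q : ℂ) * a‖ ^ 2 ≤ ‖(q : ℂ) * a + (c : ℂ) * b‖ ^ 2 := by
      have hexp : ‖(q : ℂ) * a + (c : ℂ) * b‖ ^ 2 =
          ‖(q : ℂ) * a‖ ^ 2 + 2 * ((starRingEnd ℂ) ((q : ℂ) * a) * ((c : ℂ) * b)).re +
          ‖(c : ℂ) * b‖ ^ 2 := by
        have h3 := norm_add_sq (𝕜 := ℂ) (E := ℂ) ((q : ℂ) * a) ((c : ℂ) * b)
        rw [RCLike.inner_apply] at h3
        simp at h3 ⊢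
        linear_combination h3
      have hre : 0 ≤ ((starRingEnd ℂ) ((q : ℂ) * a) * ((c : ℂ) * b)).re := by
        rw [hcb]; exact hre0
      nlinarith [hexp, sq_nonneg ‖(c : ℂ) * b‖, hre]
    nlinarith [hsq, norm_nonneg ((q : ℂ) * a), norm_nonneg ((q : ℂ) * a + (c : ℂ) * b)]

/-- Polarization: a bound on the diagonal of the quadratic form controls all inner
products. -/
private lemma rqE_aux_pol {E : Type*} [NormedAddCommGroup E] [InnerProductSpace ℂ E]
    (A : E →L[ℂ] E) (W : ℝ)
    (h : ∀ u : E, ‖(inner ℂ u (A u) : ℂ)‖ ≤ W * ‖u‖ ^ 2) (x y : E) :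
    ‖(inner ℂ (A y) x : ℂ)‖ ≤ W * (‖x‖ ^ 2 + ‖y‖ ^ 2) := by
  have h' : ∀ u : E, ‖(inner ℂ (A u) u : ℂ)‖ ≤ W * ‖u‖ ^ 2 := by
    intro u
    rw [← inner_conj_symm, RCLike.norm_conj]
    exact h u
  have hpol := inner_map_polarization (A : E →ₗ[ℂ] E) x y
  simp only [ContinuousLinearMap.coe_coe] at hpol
  rw [hpol]
  have hI : ‖Complex.I‖ = 1 := Complex.norm_I
  have hb : ‖(inner ℂ (A (x + y)) (x + y) : ℂ) - inner ℂ (A (x - y)) (x - y) +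
      Complex.I * inner ℂ (A (x + Complex.I • y)) (x + Complex.I • y) -
      Complex.I * inner ℂ (A (x - Complex.I • y)) (x - Complex.I • y)‖ ≤
      ‖(inner ℂ (A (x + y)) (x + y) : ℂ)‖ + ‖(inner ℂ (A (x - y)) (x - y) : ℂ)‖ +
      ‖(inner ℂ (A (x + Complex.I • y)) (x + Complex.I • y) : ℂ)‖ +
      ‖(inner ℂ (A (x - Complex.I • y)) (x - Complex.I • y) : ℂ)‖ := by
    calc _ ≤ ‖(inner ℂ (A (x + y)) (x + y) : ℂ) - inner ℂ (A (x - y)) (x - y) +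
          Complex.I * inner ℂ (A (x + Complex.I • y)) (x + Complex.I • y)‖ +
          ‖Complex.I * (inner ℂ (A (x - Complex.I • y)) (x - Complex.I • y) : ℂ)‖ :=
        norm_sub_le _ _
      _ ≤ _ := by
        rw [norm_mul, hI, one_mul]
        gcongr
        calc _ ≤ ‖(inner ℂ (A (x + y)) (x + y) : ℂ) - inner ℂ (A (x - y)) (x - y)‖ +
            ‖Complex.I * (inner ℂ (A (x + Complex.I • y)) (x + Complex.I • y) : ℂ)‖ :=
            norm_add_le _ _
          _ ≤ _ := by
            rw [norm_mul, hI, one_mul]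
            gcongr
            exact norm_sub_le _ _
  have hpar1 : ‖x + y‖ ^ 2 + ‖x - y‖ ^ 2 = 2 * (‖x‖ ^ 2 + ‖y‖ ^ 2) := by
    have := parallelogram_law_with_norm ℂ x y
    nlinarith [this]
  have hpar2 : ‖x + Complex.I • y‖ ^ 2 + ‖x - Complex.I • y‖ ^ 2 =
      2 * (‖x‖ ^ 2 + ‖y‖ ^ 2) := by
    have := parallelogram_law_with_norm ℂ x (Complex.I • y)
    have hIy : ‖Complex.I • y‖ = ‖y‖ := by rw [norm_smul, Complex.norm_I, one_mul]
    rw [hIy] at this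
    nlinarith [this]
  have h1 := h' (x + y)
  have h2 := h' (x - y)
  have h3 := h' (x + Complex.I • y)
  have h4 := h' (x - Complex.I • y)
  rw [norm_div]
  have : ‖(4 : ℂ)‖ = 4 := by norm_num
  rw [this]
  have e1 : W * ‖x + y‖ ^ 2 + W * ‖x - y‖ ^ 2 = 2 * (W * ‖x‖ ^ 2 + W * ‖y‖ ^ 2) := by
    linear_combination W * hpar1
  have e2 : W * ‖x + Complex.I • y‖ ^ 2 + W * ‖x - Complex.I • y‖ ^ 2 =
      2 * (W * ‖x‖ ^ 2 + W * ‖y‖ ^ 2) := by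
    linear_combination W * hpar2
  linarith [hb, h1, h2, h3, h4, e1, e2]

/-- The operator norm is at most twice the numerical radius (over `ℂ`). -/
private lemma rqE_aux_norm_le {E : Type*} [NormedAddCommGroup E] [InnerProductSpace ℂ E]
    (A : E →L[ℂ] E) (W : ℝ) (hW : 0 ≤ W)
    (h : ∀ u : E, ‖(inner ℂ u (A u) : ℂ)‖ ≤ W * ‖u‖ ^ 2) :
    ‖A‖ ≤ 2 * W := by
  have hpol := rqE_aux_pol A W h
  refine A.opNorm_le_bound (by positivity) fun v => ?_
  by_cases hAv : A v = 0
  · rw [hAv, norm_zero]; positivity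
  have hv : v ≠ 0 := by rintro rfl; simp at hAv
  have hAvn : 0 < ‖A v‖ := norm_pos_iff.mpr hAv
  have hvn : 0 < ‖v‖ := norm_pos_iff.mpr hv
  set t : ℝ := Real.sqrt (‖A v‖ / ‖v‖) with ht
  have htpos : 0 < t := Real.sqrt_pos.mpr (by positivity)
  have ht2 : t ^ 2 = ‖A v‖ / ‖v‖ := Real.sq_sqrt (by positivity)
  have key := hpol ((t⁻¹ : ℂ) • A v) ((t : ℂ) • v)
  have hAy : A ((t : ℂ) • v) = (t : ℂ) • A v := map_smul A _ _
  have hlhs : (inner ℂ (A ((t : ℂ) • v)) ((t⁻¹ : ℂ) • A v) : ℂ) =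
      ((‖A v‖ : ℂ)) ^ 2 := by
    rw [hAy, inner_smul_left, inner_smul_right, inner_self_eq_norm_sq_to_K]
    rw [Complex.conj_ofReal]
    have htC : (t : ℂ) ≠ 0 := by exact_mod_cast Complex.ofReal_ne_zero.mpr htpos.ne'
    field_simp
    rfl
  have hlhsn : ‖(inner ℂ (A ((t : ℂ) • v)) ((t⁻¹ : ℂ) • A v) : ℂ)‖ = ‖A v‖ ^ 2 := by
    rw [hlhs]
    rw [← Complex.ofReal_pow, Complex.norm_real]
    exact abs_of_nonneg (by positivity)
  have hx : ‖(t⁻¹ : ℂ) • A v‖ ^ 2 = ‖v‖ * ‖A v‖ := by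
    rw [norm_smul, norm_inv, Complex.norm_real, Real.norm_eq_abs, abs_of_pos htpos,
      mul_pow, inv_pow, ht2]
    field_simp
  have hy : ‖(t : ℂ) • v‖ ^ 2 = ‖A v‖ * ‖v‖ := by
    rw [norm_smul, Complex.norm_real, Real.norm_eq_abs, abs_of_pos htpos, mul_pow, ht2]
    field_simp
  rw [hlhsn, hx, hy] at key
  have : ‖A v‖ ^ 2 ≤ 2 * W * (‖A v‖ * ‖v‖) := by nlinarith [key]
  nlinarith [this, hAvn]

/-- The `q`-numerical radius on a complex Hilbert space `E`.  The paper's inner product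
`⟨·,·⟩` is linear in the first argument, while Mathlib's `inner x y` is linear in `y`;
hence the paper's `⟨x, y⟩` is `inner y x` below. -/
def rqE {E : Type*} [NormedAddCommGroup E] [InnerProductSpace ℂ E] (q : ℝ) (A : E →L[ℂ] E) :
    ℝ :=
  sSup { r : ℝ | ∃ x y : E, ‖x‖ = 1 ∧ ‖y‖ = 1 ∧ (inner ℂ y x : ℂ) = (q : ℂ) ∧
    r = ‖(inner ℂ y (A x) : ℂ)‖ }

/-- On a complex Hilbert space of dimension at least `2`, for `0 < q ≤ 1`,
`(q/2)·‖A‖ ≤ r_q(A) ≤ ‖A‖` for every bounded operator `A`; in particular the `q`-numerical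
radius is a norm equivalent to the operator norm. -/
theorem statement3 {E : Type*} [NormedAddCommGroup E] [InnerProductSpace ℂ E]
    [CompleteSpace E] (hdim : 2 ≤ Module.rank ℂ E)
    (q : ℝ) (hq0 : 0 < q) (hq1 : q ≤ 1) (A : E →L[ℂ] E) :
    (q / 2) * ‖A‖ ≤ rqE q A ∧ rqE q A ≤ ‖A‖ := by
  set S : Set ℝ := { r : ℝ | ∃ x y : E, ‖x‖ = 1 ∧ ‖y‖ = 1 ∧ (inner ℂ y x : ℂ) = (q : ℂ) ∧
    r = ‖(inner ℂ y (A x) : ℂ)‖ } with hS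
  have hrq : rqE q A = sSup S := rfl
  have hub : ∀ r ∈ S, r ≤ ‖A‖ := by
    rintro r ⟨x, y, hx1, hy1, _, rfl⟩
    calc ‖(inner ℂ y (A x) : ℂ)‖ ≤ ‖y‖ * ‖A x‖ := norm_inner_le_norm _ _
      _ = ‖A x‖ := by rw [hy1, one_mul]
      _ ≤ ‖A‖ * ‖x‖ := A.le_opNorm x
      _ = ‖A‖ := by rw [hx1, mul_one]
  have hbdd : BddAbove S := ⟨‖A‖, fun r hr => hub r hr⟩
  -- the key lower estimate
  have hkey : ∀ x : E, ‖x‖ = 1 → q * ‖(inner ℂ x (A x) : ℂ)‖ ≤ sSup S := by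
    intro x hx1
    obtain ⟨z, hz1, hxz⟩ := rqE_aux_exists_orth hdim x
    obtain ⟨y, hy1, hyx, hylb⟩ := rqE_aux_key q hq0 hq1 A x hx1 z hz1 hxz
    have hmem : ‖(inner ℂ y (A x) : ℂ)‖ ∈ S := ⟨x, y, hx1, hy1, hyx, rfl⟩
    exact hylb.trans (le_csSup hbdd hmem)
  -- E is nontrivial, hence contains a unit vector
  have hnt : Nontrivial E := by
    by_contra h
    rw [not_nontrivial_iff_subsingleton] at h
    rw [rank_subsingleton'] at hdim
    exact absurd hdim (by norm_num)
  obtain ⟨x0, hx0⟩ := exists_ne (0 : E)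
  have hx0n : 0 < ‖x0‖ := norm_pos_iff.mpr hx0
  have hx0u : ‖(((‖x0‖⁻¹ : ℝ)) : ℂ) • x0‖ = 1 := by
    rw [norm_smul, Complex.norm_real, Real.norm_eq_abs, abs_of_pos (by positivity)]
    field_simp
  have hM0 : 0 ≤ sSup S := by
    have := hkey _ hx0u
    have h0 : 0 ≤ q * ‖(inner ℂ ((((‖x0‖⁻¹ : ℝ)) : ℂ) • x0) (A ((((‖x0‖⁻¹ : ℝ)) : ℂ) • x0)) : ℂ)‖ := by
      positivity
    linarith
  set M : ℝ := sSup S with hM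
  -- the diagonal bound for every vector
  have hdiag : ∀ u : E, ‖(inner ℂ u (A u) : ℂ)‖ ≤ (M / q) * ‖u‖ ^ 2 := by
    intro u
    by_cases hu : u = 0
    · subst hu
      rw [map_zero, inner_zero_left, norm_zero, norm_zero]
      positivity
    have hun : 0 < ‖u‖ := norm_pos_iff.mpr hu
    set r : ℝ := ‖u‖⁻¹ with hr
    have hru : ‖((r : ℝ) : ℂ) • u‖ = 1 := by
      rw [norm_smul, Complex.norm_real, Real.norm_eq_abs, abs_of_pos (by positivity), hr]
      field_simp
    have hinner : (inner ℂ ((r : ℂ) • u) (A ((r : ℂ) • u)) : ℂ) =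
        ((r ^ 2 : ℝ) : ℂ) * inner ℂ u (A u) := by
      rw [map_smul, inner_smul_left, inner_smul_right, Complex.conj_ofReal]
      push_cast
      ring
    have hnormi : ‖(inner ℂ ((r : ℂ) • u) (A ((r : ℂ) • u)) : ℂ)‖ =
        r ^ 2 * ‖(inner ℂ u (A u) : ℂ)‖ := by
      rw [hinner, norm_mul, Complex.norm_real, Real.norm_eq_abs, abs_of_nonneg (sq_nonneg r)]
    have hk := hkey _ hru
    rw [hnormi] at hk
    have hr2 : r ^ 2 * ‖u‖ ^ 2 = 1 := by rw [hr]; field_simp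
    have e : q * ‖(inner ℂ u (A u) : ℂ)‖ =
        q * (r ^ 2 * ‖(inner ℂ u (A u) : ℂ)‖) * ‖u‖ ^ 2 := by
      linear_combination (-(q * ‖(inner ℂ u (A u) : ℂ)‖)) * hr2
    rw [div_mul_eq_mul_div, le_div_iff₀ hq0]
    linarith [mul_le_mul_of_nonneg_right hk (sq_nonneg ‖u‖), e]
  have hW : 0 ≤ M / q := by positivity
  have hAle : ‖A‖ ≤ 2 * (M / q) := rqE_aux_norm_le A (M / q) hW hdiag
  constructor
  · rw [hrq]
    have h2 : q / 2 * ‖A‖ ≤ q / 2 * (2 * (M / q)) :=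
      mul_le_mul_of_nonneg_left hAle (by positivity)
    have h3 : q / 2 * (2 * (M / q)) = M := by
      field_simp
    linarith [h2, h3]
  · rw [hrq, hM]
    exact Real.sSup_le hub (norm_nonneg A)

end
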